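/- arXiv:1707.08201 — 6 statements merged into one kernel-verified Lean document; each statement's English description precedes it below -/
import Mathlib

section
/- Let n ≥ 1, let F₁₃ ∈ ℝ^{n×1} be a column vector and F₃₁ ∈ ℝ^{1×n} a row vector. Then the (n+1)×(n+1) block matrix [[F₁₃, Iₙ], [0, F₃₁]] (first column (F₁₃; 0), remaining columns (Iₙ; F₃₁)) is invertible if and only if the scalar product F₃₁ · F₁₃ is nonzero. -/
open Matrix

/-- The bordered matrix `[[v, H], [0, w]]`: its first column is `(v; 0)` and its
remaining `n` columns are `(H; w)`. -/
noncomputable def borderedMatrix {n : ℕ} (v : Matrix (Fin n) (Fin 1) ℝ)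
    (H : Matrix (Fin n) (Fin n) ℝ) (w : Matrix (Fin 1) (Fin n) ℝ) :
    Matrix (Fin (n + 1)) (Fin (n + 1)) ℝ :=
  Matrix.of fun i j =>
    Fin.lastCases (motive := fun _ => ℝ)
      (Fin.cases (motive := fun _ => ℝ) 0 (fun j' => w 0 j') j)
      (fun i' => Fin.cases (motive := fun _ => ℝ) (v i' 0) (fun j' => H i' j') j)
      i

/-- Column equiv: `0 ↦ inr 0`, `succ j ↦ inl j`. -/
def colEquiv (n : ℕ) : Fin (n + 1) ≃ (Fin n ⊕ Fin 1) where
  toFun := Fin.cases (Sum.inr 0) (fun j => Sum.inl j)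
  invFun := Sum.elim (fun j => j.succ) (fun _ => 0)
  left_inv := by
    intro j
    induction j using Fin.cases <;> simp
  right_inv := by
    rintro (j | j)
    · simp
    · simp [Fin.fin_one_eq_zero j]

/-- Row equiv: `castSucc i ↦ inl i`, `last ↦ inr 0`. -/
def rowEquiv (n : ℕ) : Fin (n + 1) ≃ (Fin n ⊕ Fin 1) where
  toFun := Fin.lastCases (Sum.inr 0) (fun i => Sum.inl i)
  invFun := Sum.elim (fun i => i.castSucc) (fun _ => Fin.last n)
  left_inv := by
    intro i
    induction i using Fin.lastCases <;> simp
  right_inv := by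
    rintro (i | i)
    · simp
    · simp [Fin.fin_one_eq_zero i]

theorem borderedMatrix_eq {n : ℕ} (v : Matrix (Fin n) (Fin 1) ℝ)
    (H : Matrix (Fin n) (Fin n) ℝ) (w : Matrix (Fin 1) (Fin n) ℝ) :
    borderedMatrix v H w =
      (Matrix.fromBlocks H v w 0).submatrix (rowEquiv n) (colEquiv n) := by
  ext i j
  induction i using Fin.lastCases <;> induction j using Fin.cases <;>
    simp [borderedMatrix, rowEquiv, colEquiv, Matrix.fromBlocks]

/-- for `n ≥ 1`, the block matrix `[[F₁₃, Iₙ], [0, F₃₁]]`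
(first column `(F₁₃; 0)`, remaining columns `(Iₙ; F₃₁)`) is invertible iff the
scalar product `F₃₁ · F₁₃` is nonzero. -/
theorem phaseCondition_matrix_isUnit_iff {n : ℕ} (hn : 1 ≤ n)
    (F₁₃ : Matrix (Fin n) (Fin 1) ℝ) (F₃₁ : Matrix (Fin 1) (Fin n) ℝ) :
    IsUnit (borderedMatrix F₁₃ (1 : Matrix (Fin n) (Fin n) ℝ) F₃₁) ↔
      (F₃₁ * F₁₃) 0 0 ≠ 0 := by
  set N : Matrix (Fin n ⊕ Fin 1) (Fin n ⊕ Fin 1) ℝ :=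
    Matrix.fromBlocks 1 F₁₃ F₃₁ 0 with hN
  have hdetN : N.det = -((F₃₁ * F₁₃) 0 0) := by
    rw [hN, Matrix.det_fromBlocks_one₁₁]
    rw [zero_sub, Matrix.det_fin_one]
    simp
  have hM : borderedMatrix F₁₃ (1 : Matrix (Fin n) (Fin n) ℝ) F₃₁ =
      (N.submatrix (rowEquiv n) (rowEquiv n)).submatrix id
        (((colEquiv n).trans (rowEquiv n).symm)) := by
    rw [borderedMatrix_eq]
    ext i j
    simp [hN]
  rw [Matrix.isUnit_iff_isUnit_det, hM, Matrix.det_permute',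
    Matrix.det_submatrix_equiv_self, hdetN, isUnit_iff_ne_zero]
  simp only [mul_ne_zero_iff, ne_eq, neg_eq_zero]
  constructor
  · tauto
  · intro h
    refine ⟨?_, h⟩
    simpa using (Equiv.Perm.sign (((colEquiv n).trans (rowEquiv n).symm))).ne_zero
end

section
/- Let n₁, n₂ ≥ 1, let F₁₃ ∈ ℝ^{n₁×1}, A ∈ ℝ^{n₂×n₁}, let B ∈ ℝ^{n₂×n₂} be invertible, and let F₃₂ ∈ ℝ^{1×n₂}. Then the (n₁+n₂+1)×(n₁+n₂+1) block matrix [[F₁₃, I_{n₁}, 0], [0, A, B], [0, 0, F₃₂]] is invertible if and only if the scalar F₃₂ B⁻¹ A F₁₃ is nonzero. -/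
open Matrix

section Aux

variable {n₁ n₂ : ℕ}

private lemma sum_elim_eq_zero {α β : Type*} {f : α → ℝ} {g : β → ℝ} :
    Sum.elim f g = 0 ↔ f = 0 ∧ g = 0 := by
  constructor
  · intro h
    exact ⟨funext fun i => congrFun h (Sum.inl i), funext fun i => congrFun h (Sum.inr i)⟩
  · rintro ⟨rfl, rfl⟩
    funext i; cases i <;> rfl

/-- Kernel characterization of the block matrix. -/
private lemma kernel_iff (F₁₃ : Matrix (Fin n₁) (Fin 1) ℝ) (A : Matrix (Fin n₂) (Fin n₁) ℝ)
    (B : Matrix (Fin n₂) (Fin n₂) ℝ) (hB : IsUnit B)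
    (F₃₂ : Matrix (Fin 1) (Fin n₂) ℝ) (v : Fin 1 ⊕ (Fin n₁ ⊕ Fin n₂) → ℝ) :
    (Matrix.fromBlocks F₁₃
            (Matrix.fromCols (1 : Matrix (Fin n₁) (Fin n₁) ℝ)
              (0 : Matrix (Fin n₁) (Fin n₂) ℝ))
            (0 : Matrix (Fin n₂ ⊕ Fin 1) (Fin 1) ℝ)
            (Matrix.fromRows (Matrix.fromCols A B)
              (Matrix.fromCols (0 : Matrix (Fin 1) (Fin n₁) ℝ) F₃₂))) *ᵥ v = 0 ↔
      (v ∘ Sum.inr ∘ Sum.inl = -(F₁₃ *ᵥ (v ∘ Sum.inl)) ∧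
       v ∘ Sum.inr ∘ Sum.inr = -(B⁻¹ *ᵥ A *ᵥ (v ∘ Sum.inr ∘ Sum.inl)) ∧
       F₃₂ *ᵥ (v ∘ Sum.inr ∘ Sum.inr) = 0) := by
  have hBd : IsUnit B.det := (Matrix.isUnit_iff_isUnit_det B).mp hB
  set x₀ := v ∘ Sum.inl with hx₀
  set x₁ := v ∘ Sum.inr ∘ Sum.inl with hx₁
  set x₂ := v ∘ Sum.inr ∘ Sum.inr with hx₂
  have hw : v ∘ Sum.inr = Sum.elim x₁ x₂ := by
    funext i; cases i <;> rfl
  rw [Matrix.fromBlocks_mulVec, hw, Matrix.fromCols_mulVec_sumElim,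
    Matrix.fromRows_mulVec, Matrix.one_mulVec, Matrix.zero_mulVec, Matrix.zero_mulVec,
    add_zero, zero_add, Matrix.fromCols_mulVec_sumElim, Matrix.fromCols_mulVec_sumElim,
    Matrix.zero_mulVec, zero_add, sum_elim_eq_zero, sum_elim_eq_zero]
  constructor
  · rintro ⟨h1, h2, h3⟩
    refine ⟨by linear_combination h1, ?_, h3⟩
    have h2' : B⁻¹ *ᵥ (A *ᵥ x₁ + B *ᵥ x₂) = 0 := by rw [h2, Matrix.mulVec_zero]
    rw [Matrix.mulVec_add, Matrix.mulVec_mulVec, Matrix.mulVec_mulVec,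
      Matrix.nonsing_inv_mul B hBd, Matrix.one_mulVec, ← Matrix.mulVec_mulVec] at h2'
    linear_combination h2'
  · rintro ⟨h1, h2, h3⟩
    refine ⟨by linear_combination h1, ?_, h3⟩
    rw [h2, Matrix.mulVec_neg, Matrix.mulVec_mulVec (A *ᵥ x₁) B B⁻¹,
      Matrix.mul_nonsing_inv B hBd, Matrix.one_mulVec]
    simp

/-- The "scalar" identity for the back-substituted third equation. -/
private lemma third_eq (F₁₃ : Matrix (Fin n₁) (Fin 1) ℝ) (A : Matrix (Fin n₂) (Fin n₁) ℝ)
    (B : Matrix (Fin n₂) (Fin n₂) ℝ) (F₃₂ : Matrix (Fin 1) (Fin n₂) ℝ) (x₀ : Fin 1 → ℝ) :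
    F₃₂ *ᵥ (-(B⁻¹ *ᵥ A *ᵥ (-(F₁₃ *ᵥ x₀)))) = (F₃₂ * B⁻¹ * A * F₁₃) *ᵥ x₀ := by
  simp [Matrix.mulVec_neg, Matrix.mulVec_mulVec, Matrix.mul_assoc]

private lemma scalar_apply (S : Matrix (Fin 1) (Fin 1) ℝ) (x₀ : Fin 1 → ℝ) :
    (S *ᵥ x₀) 0 = S 0 0 * x₀ 0 := by
  simp [Matrix.mulVec, dotProduct, Fin.sum_univ_one]

end Aux

/-- the `(n₁+n₂+1)×(n₁+n₂+1)` block matrix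
`[[F₁₃, I_{n₁}, 0], [0, A, B], [0, 0, F₃₂]]` (block rows of heights `n₁, n₂, 1`,
block columns of widths `1, n₁, n₂`), with `B` invertible, is invertible iff the
scalar `F₃₂ B⁻¹ A F₁₃` is nonzero.  Invertibility of the square-shaped matrix is
expressed as bijectivity of the associated linear map `x ↦ M x`. -/
theorem phaseCondition_algebraic_index2_criterion {n₁ n₂ : ℕ}
    (hn₁ : 1 ≤ n₁) (hn₂ : 1 ≤ n₂)
    (F₁₃ : Matrix (Fin n₁) (Fin 1) ℝ) (A : Matrix (Fin n₂) (Fin n₁) ℝ)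
    (B : Matrix (Fin n₂) (Fin n₂) ℝ) (hB : IsUnit B)
    (F₃₂ : Matrix (Fin 1) (Fin n₂) ℝ) :
    Function.Bijective
        (Matrix.mulVec
          (Matrix.fromBlocks F₁₃
            (Matrix.fromCols (1 : Matrix (Fin n₁) (Fin n₁) ℝ)
              (0 : Matrix (Fin n₁) (Fin n₂) ℝ))
            (0 : Matrix (Fin n₂ ⊕ Fin 1) (Fin 1) ℝ)
            (Matrix.fromRows (Matrix.fromCols A B)
              (Matrix.fromCols (0 : Matrix (Fin 1) (Fin n₁) ℝ) F₃₂)))) ↔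
      (F₃₂ * B⁻¹ * A * F₁₃) 0 0 ≠ 0 := by
  set M := (Matrix.fromBlocks F₁₃
      (Matrix.fromCols (1 : Matrix (Fin n₁) (Fin n₁) ℝ)
        (0 : Matrix (Fin n₁) (Fin n₂) ℝ))
      (0 : Matrix (Fin n₂ ⊕ Fin 1) (Fin 1) ℝ)
      (Matrix.fromRows (Matrix.fromCols A B)
        (Matrix.fromCols (0 : Matrix (Fin 1) (Fin n₁) ℝ) F₃₂))) with hM
  -- kernel trivial ↔ scalar nonzero
  have hker : (∀ v, M *ᵥ v = 0 → v = 0) ↔ (F₃₂ * B⁻¹ * A * F₁₃) 0 0 ≠ 0 := by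
    constructor
    · intro h hs
      -- build a nonzero kernel vector
      set x₀ : Fin 1 → ℝ := fun _ => 1 with hx₀
      set x₁ : Fin n₁ → ℝ := -(F₁₃ *ᵥ x₀) with hx₁
      set x₂ : Fin n₂ → ℝ := -(B⁻¹ *ᵥ A *ᵥ x₁) with hx₂
      set v : Fin 1 ⊕ (Fin n₁ ⊕ Fin n₂) → ℝ := Sum.elim x₀ (Sum.elim x₁ x₂) with hv
      have hker0 : M *ᵥ v = 0 := by
        rw [hM, kernel_iff F₁₃ A B hB F₃₂]
        refine ⟨rfl, rfl, ?_⟩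
        show F₃₂ *ᵥ x₂ = 0
        rw [hx₂, hx₁, third_eq]
        funext i
        have hi : i = 0 := Subsingleton.elim _ _
        subst hi
        rw [_root_.scalar_apply, hs, zero_mul]
        rfl
      have := congrFun (h v hker0) (Sum.inl 0)
      simp [hv, hx₀] at this
    · intro hs v hv0
      rw [hM, kernel_iff F₁₃ A B hB F₃₂] at hv0
      obtain ⟨h1, h2, h3⟩ := hv0
      rw [h1] at h2
      have hs' : (F₃₂ * B⁻¹ * A * F₁₃) *ᵥ (v ∘ Sum.inl) = 0 := by
        rw [← third_eq F₁₃ A B F₃₂, ← h2, h3]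
      have hc : (F₃₂ * B⁻¹ * A * F₁₃) 0 0 * (v ∘ Sum.inl) 0 = 0 := by
        rw [← _root_.scalar_apply, hs']
        rfl
      have hx0 : v ∘ Sum.inl = 0 := by
        funext i
        have hi : i = 0 := Subsingleton.elim _ _
        subst hi
        exact (mul_eq_zero.mp hc).resolve_left hs
      rw [hx0] at h1 h2
      simp only [Matrix.mulVec_zero, neg_zero] at h1 h2
      funext i
      rcases i with i | i | i
      · exact congrFun hx0 i
      · exact congrFun h1 i
      · exact congrFun h2 i
  -- transfer bijectivity to a square matrix
  have e : (Fin n₁ ⊕ (Fin n₂ ⊕ Fin 1)) ≃ (Fin 1 ⊕ (Fin n₁ ⊕ Fin n₂)) :=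
    Fintype.equivOfCardEq (by simp; omega)
  set M' := M.submatrix (Equiv.refl _) e with hM'
  have hcomp : M'.mulVec = M.mulVec ∘ (fun v => v ∘ e.symm) := by
    funext v
    rw [hM', Matrix.submatrix_mulVec_equiv]
    rfl
  have hbij : Function.Bijective ((fun v : (Fin n₁ ⊕ (Fin n₂ ⊕ Fin 1)) → ℝ => v ∘ e.symm)) :=
    (Equiv.arrowCongr e (Equiv.refl ℝ)).bijective
  have hbij_iff : Function.Bijective M.mulVec ↔ Function.Bijective M'.mulVec := by
    rw [hcomp]
    exact (Function.Bijective.of_comp_iff _ hbij).symm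
  have hinj_iff : Function.Injective M.mulVec ↔ Function.Injective M'.mulVec := by
    rw [hcomp]
    exact (Function.Injective.of_comp_iff' _ hbij).symm
  have hsq : Function.Bijective M'.mulVec ↔ Function.Injective M'.mulVec := by
    constructor
    · exact fun h => h.1
    · intro h
      have := Matrix.mulVec_injective_iff_isUnit.mp h
      exact ⟨h, Matrix.mulVec_surjective_iff_isUnit.mpr this⟩
  have hinjker : Function.Injective M.mulVec ↔ (∀ v, M *ᵥ v = 0 → v = 0) := by
    constructor
    · intro h v hv
      exact h (hv.trans (Matrix.mulVec_zero M).symm)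
    · intro h a b hab
      have h0 : M *ᵥ (a - b) = 0 := by rw [Matrix.mulVec_sub, hab, sub_self]
      exact sub_eq_zero.mp (h _ h0)
  rw [hbij_iff, hsq, ← hinj_iff, hinjker, hker]
end

section
/- Let n₁, n₂ ≥ 1, let F₁₃ ∈ ℝ^{n₁×1}, A ∈ ℝ^{n₂×n₁}, let B ∈ ℝ^{n₂×n₂} be invertible, and let F₃₁ ∈ ℝ^{1×n₁}, F₃₂ ∈ ℝ^{1×n₂}. Then the (n₁+n₂+1)×(n₁+n₂+1) block matrix [[F₁₃, I_{n₁}, 0], [0, A, B], [0, F₃₁, F₃₂]] is invertible if and only if F₃₁ F₁₃ − F₃₂ B⁻¹ A F₁₃ ≠ 0. -/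
open Matrix

/-- the `(n₁+n₂+1)×(n₁+n₂+1)` block matrix
`[[F₁₃, I_{n₁}, 0], [0, A, B], [0, F₃₁, F₃₂]]` (block rows of heights `n₁, n₂, 1`,
block columns of widths `1, n₁, n₂`), with `B` invertible, is invertible iff
`F₃₁ F₁₃ − F₃₂ B⁻¹ A F₁₃ ≠ 0`.  Invertibility of the square-shaped matrix is
expressed as bijectivity of the associated linear map `x ↦ M x`. -/
theorem optimality_index2_criterion {n₁ n₂ : ℕ}
    (hn₁ : 1 ≤ n₁) (hn₂ : 1 ≤ n₂)
    (F₁₃ : Matrix (Fin n₁) (Fin 1) ℝ) (A : Matrix (Fin n₂) (Fin n₁) ℝ)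
    (B : Matrix (Fin n₂) (Fin n₂) ℝ) (hB : IsUnit B)
    (F₃₁ : Matrix (Fin 1) (Fin n₁) ℝ) (F₃₂ : Matrix (Fin 1) (Fin n₂) ℝ) :
    Function.Bijective
        (Matrix.mulVec
          (Matrix.fromBlocks F₁₃
            (Matrix.fromCols (1 : Matrix (Fin n₁) (Fin n₁) ℝ)
              (0 : Matrix (Fin n₁) (Fin n₂) ℝ))
            (0 : Matrix (Fin n₂ ⊕ Fin 1) (Fin 1) ℝ)
            (Matrix.fromRows (Matrix.fromCols A B)
              (Matrix.fromCols F₃₁ F₃₂)))) ↔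
      (F₃₁ * F₁₃ - F₃₂ * B⁻¹ * A * F₁₃) 0 0 ≠ 0 := by
  set M := Matrix.fromBlocks F₁₃
      (Matrix.fromCols (1 : Matrix (Fin n₁) (Fin n₁) ℝ)
        (0 : Matrix (Fin n₁) (Fin n₂) ℝ))
      (0 : Matrix (Fin n₂ ⊕ Fin 1) (Fin 1) ℝ)
      (Matrix.fromRows (Matrix.fromCols A B)
        (Matrix.fromCols F₃₁ F₃₂)) with hM
  set e : (Fin 1 ⊕ (Fin n₁ ⊕ Fin n₂)) ≃ (Fin n₁ ⊕ (Fin n₂ ⊕ Fin 1)) :=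
    (Equiv.sumComm _ _).trans (Equiv.sumAssoc _ _ _) with he
  set M' : Matrix (Fin 1 ⊕ (Fin n₁ ⊕ Fin n₂)) (Fin 1 ⊕ (Fin n₁ ⊕ Fin n₂)) ℝ :=
    M.submatrix e id with hM'
  have hMe : M' = Matrix.fromBlocks 0 (Matrix.fromCols F₃₁ F₃₂)
      (Matrix.fromRows F₁₃ 0) (Matrix.fromBlocks 1 0 A B) := by
    ext i j
    rcases i with i | i | i <;> rcases j with j | j | j <;>
      simp [hM', hM, he, Matrix.fromBlocks, Matrix.fromCols_apply_inl, Matrix.fromCols_apply_inr, Matrix.fromRows_apply_inl, Matrix.fromRows_apply_inr,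
        Matrix.submatrix, Equiv.sumComm, Equiv.sumAssoc]
  have hbij : Function.Bijective (Matrix.mulVec M) ↔ Function.Bijective (Matrix.mulVec M') := by
    have key : Matrix.mulVec M' = (fun f => f ∘ e) ∘ Matrix.mulVec M := rfl
    constructor
    · intro h
      rw [key]
      exact (Equiv.arrowCongr e.symm (Equiv.refl ℝ)).bijective.comp h
    · intro h
      have key2 : Matrix.mulVec M = (fun f => f ∘ e.symm) ∘ Matrix.mulVec M' := by
        rw [key]; funext v; funext i; simp
      rw [key2]
      exact (Equiv.arrowCongr e (Equiv.refl ℝ)).bijective.comp h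
  rw [hbij]
  have hunit : Function.Bijective (Matrix.mulVec M') ↔ IsUnit M' :=
    ⟨fun h => Matrix.mulVec_injective_iff_isUnit.mp h.1,
     fun h => ⟨Matrix.mulVec_injective_iff_isUnit.mpr h,
       Matrix.mulVec_surjective_iff_isUnit.mpr h⟩⟩
  rw [hunit, Matrix.isUnit_iff_isUnit_det, isUnit_iff_ne_zero, hMe]
  haveI : Invertible B := hB.invertible
  haveI : Invertible (1 : Matrix (Fin n₁) (Fin n₁) ℝ) := invertibleOne
  haveI : Invertible (Matrix.fromBlocks (1 : Matrix (Fin n₁) (Fin n₁) ℝ) 0 A B) :=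
    Matrix.fromBlocksZero₁₂Invertible 1 A B
  rw [Matrix.det_fromBlocks₂₂, Matrix.invOf_fromBlocks_zero₁₂_eq,
    Matrix.fromCols_mul_fromBlocks, Matrix.fromCols_mul_fromRows]
  have hdetB : (Matrix.fromBlocks (1 : Matrix (Fin n₁) (Fin n₁) ℝ) 0 A B).det = B.det := by
    rw [Matrix.det_fromBlocks_zero₁₂, Matrix.det_one, one_mul]
  rw [hdetB]
  have hBinv : ⅟B = B⁻¹ := Matrix.invOf_eq_nonsing_inv B
  rw [invOf_one, hBinv]
  have hBdet : B.det ≠ 0 := ((Matrix.isUnit_iff_isUnit_det B).mp hB).ne_zero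
  have key3 : ((0 : Matrix (Fin 1) (Fin 1) ℝ) -
      ((F₃₁ * (1 : Matrix (Fin n₁) (Fin n₁) ℝ) +
        F₃₂ * -(B⁻¹ * A * (1 : Matrix (Fin n₁) (Fin n₁) ℝ))) * F₁₃ +
       (F₃₁ * (0 : Matrix (Fin n₁) (Fin n₂) ℝ) + F₃₂ * B⁻¹) *
         (0 : Matrix (Fin n₂) (Fin 1) ℝ)))
      = -(F₃₁ * F₁₃ - F₃₂ * B⁻¹ * A * F₁₃) := by
    simp [Matrix.mul_one, Matrix.mul_zero, Matrix.mul_neg, Matrix.neg_mul,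
      Matrix.add_mul, Matrix.mul_assoc, sub_eq_add_neg]
  rw [key3, Matrix.det_fin_one, Matrix.neg_apply, mul_neg, neg_ne_zero, mul_ne_zero_iff]
  exact ⟨fun h => h.2, fun h => ⟨hBdet, h⟩⟩
end

section
/- Let n₁, n₂ ≥ 1, F₁₃ ∈ ℝ^{n₁×1}, F₃₁ ∈ ℝ^{1×n₁}, F₃₂ ∈ ℝ^{1×n₂} with F₃₂ ≠ 0. Then the (n₁+1)×(1+n₁+n₂) block matrix C = [[F₁₃, I_{n₁}, 0], [0, F₃₁, F₃₂]] has a kernel vector (s₀, s₁, s₂) ∈ ℝ × ℝ^{n₁} × ℝ^{n₂} with s₀ = 1. In particular, the kernel of C is not contained in {(s₀, s₁, s₂) : s₀ = 0}, i.e., C is not 1-full with respect to its first column. -/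
open Matrix

/-- if `F₃₂ ≠ 0`, the `(n₁+1)×(1+n₁+n₂)` block matrix
`C = [[F₁₃, I_{n₁}, 0], [0, F₃₁, F₃₂]]` has a kernel vector
`(s₀, s₁, s₂)` with `s₀ = 1`; in particular `C` is not 1-full with respect to
its first column. -/
theorem optimality_not_oneFull {n₁ n₂ : ℕ} (hn₁ : 1 ≤ n₁) (hn₂ : 1 ≤ n₂)
    (F₁₃ : Matrix (Fin n₁) (Fin 1) ℝ) (F₃₁ : Matrix (Fin 1) (Fin n₁) ℝ)
    (F₃₂ : Matrix (Fin 1) (Fin n₂) ℝ) (hF₃₂ : F₃₂ ≠ 0) :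
    (∃ s : Fin 1 ⊕ (Fin n₁ ⊕ Fin n₂) → ℝ,
        (Matrix.fromBlocks F₁₃
            (Matrix.fromCols (1 : Matrix (Fin n₁) (Fin n₁) ℝ)
              (0 : Matrix (Fin n₁) (Fin n₂) ℝ))
            (0 : Matrix (Fin 1) (Fin 1) ℝ)
            (Matrix.fromCols F₃₁ F₃₂)).mulVec s = 0 ∧
          s (Sum.inl 0) = 1) ∧
      ¬ (∀ s : Fin 1 ⊕ (Fin n₁ ⊕ Fin n₂) → ℝ,
          (Matrix.fromBlocks F₁₃
              (Matrix.fromCols (1 : Matrix (Fin n₁) (Fin n₁) ℝ)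
                (0 : Matrix (Fin n₁) (Fin n₂) ℝ))
              (0 : Matrix (Fin 1) (Fin 1) ℝ)
              (Matrix.fromCols F₃₁ F₃₂)).mulVec s = 0 →
            s (Sum.inl 0) = 0) := by
  -- find a nonzero entry of F₃₂
  have hex : ∃ k : Fin n₂, F₃₂ 0 k ≠ 0 := by
    by_contra h
    push_neg at h
    apply hF₃₂
    ext i j
    have : i = 0 := Subsingleton.elim i 0
    subst this
    simpa using h j
  obtain ⟨k, hk⟩ := hex
  set c : ℝ := ∑ j, F₃₁ 0 j * F₁₃ j 0 with hc
  set s : Fin 1 ⊕ (Fin n₁ ⊕ Fin n₂) → ℝ := fun x =>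
    match x with
    | Sum.inl _ => 1
    | Sum.inr (Sum.inl j) => -F₁₃ j 0
    | Sum.inr (Sum.inr j) => if j = k then c / F₃₂ 0 k else 0 with hs
  have hker : (Matrix.fromBlocks F₁₃
      (Matrix.fromCols (1 : Matrix (Fin n₁) (Fin n₁) ℝ)
        (0 : Matrix (Fin n₁) (Fin n₂) ℝ))
      (0 : Matrix (Fin 1) (Fin 1) ℝ)
      (Matrix.fromCols F₃₁ F₃₂)).mulVec s = 0 := by
    funext i
    rcases i with i | i
    · simp [mulVec, dotProduct, Fintype.sum_sum_type, fromBlocks, fromCols, s,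
        Matrix.one_apply, Finset.mul_sum, ite_and, Fin.sum_univ_one]
    · have : i = 0 := Subsingleton.elim i 0
      subst this
      simp only [mulVec, dotProduct, Fintype.sum_sum_type, fromBlocks, fromCols, s, Matrix.of_apply,
        Sum.elim_inl, Sum.elim_inr, Matrix.zero_apply, Pi.zero_apply, mul_ite, mul_zero,
        Finset.sum_ite_eq', Finset.mem_univ, if_true, mul_one, zero_mul]
      field_simp
      simp [hc, Finset.sum_neg_distrib]
  refine ⟨⟨s, hker, rfl⟩, ?_⟩
  intro h
  have := h s hker
  simp [s] at this
end

section
/- Let n₁, n₂ ≥ 1, let J₁₁ ∈ ℝ^{n₁×n₁}, J₁₂ ∈ ℝ^{n₁×n₂}, J₂₁ ∈ ℝ^{n₂×n₁}, let J₂₂ ∈ ℝ^{n₂×n₂} be invertible, let F₁₃ ∈ ℝ^{n₁×1}, F₃₁ ∈ ℝ^{1×n₁}, F₃₂ ∈ ℝ^{1×n₂}, and set N = n₁+n₂+1. Consider the 2N×2N block matrix B¹ whose first three block rows are [[I_{n₁},0,0,0,0,0],[0,0,0,0,0,0],[0,0,0,0,0,0]] and whose last three block rows are [[J₁₁, J₁₂,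 F₁₃, I_{n₁}, 0, 0],[J₂₁, J₂₂, 0, 0, 0, 0],[F₃₁, F₃₂, 0, 0, 0, 0]], with block column widths n₁, n₂, 1, n₁, n₂, 1. Then ker B¹ = {(0, 0, s₃, −F₁₃ s₃, u₂, u₃) : s₃ ∈ ℝ, u₂ ∈ ℝ^{n₂}, u₃ ∈ ℝ}. In particular, B¹ has a kernel vector whose third block component s₃ equals 1, so B¹ is not 1-full with respect to its first N columns. -/
open Matrix

/-- A 3×3 block matrix with block rows/columns of sizes `n₁, n₂, 1`. -/
noncomputable def blockMatrix3 {n₁ n₂ : ℕ}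
    (A11 : Matrix (Fin n₁) (Fin n₁) ℝ) (A12 : Matrix (Fin n₁) (Fin n₂) ℝ)
    (A13 : Matrix (Fin n₁) (Fin 1) ℝ)
    (A21 : Matrix (Fin n₂) (Fin n₁) ℝ) (A22 : Matrix (Fin n₂) (Fin n₂) ℝ)
    (A23 : Matrix (Fin n₂) (Fin 1) ℝ)
    (A31 : Matrix (Fin 1) (Fin n₁) ℝ) (A32 : Matrix (Fin 1) (Fin n₂) ℝ)
    (A33 : Matrix (Fin 1) (Fin 1) ℝ) :
    Matrix (Fin n₁ ⊕ (Fin n₂ ⊕ Fin 1)) (Fin n₁ ⊕ (Fin n₂ ⊕ Fin 1)) ℝ :=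
  Matrix.fromBlocks A11 (Matrix.fromCols A12 A13)
    (Matrix.fromRows A21 A31) (Matrix.fromBlocks A22 A23 A32 A33)

/-- The matrix `ℬ^{[1]}` of the structural index analysis for the phase
condition: a `2N×2N` matrix (`N = n₁+n₂+1`) with block column widths
`n₁, n₂, 1, n₁, n₂, 1`, whose first three block rows are
`[[I,0,0,0,0,0],[0,…,0],[0,…,0]]` and whose last three block rows are
`[[J₁₁, J₁₂, F₁₃, I, 0, 0],[J₂₁, J₂₂, 0, 0, 0, 0],[F₃₁, F₃₂, 0, 0, 0, 0]]`. -/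
noncomputable def calB1 {n₁ n₂ : ℕ}
    (J₁₁ : Matrix (Fin n₁) (Fin n₁) ℝ) (J₁₂ : Matrix (Fin n₁) (Fin n₂) ℝ)
    (J₂₁ : Matrix (Fin n₂) (Fin n₁) ℝ) (J₂₂ : Matrix (Fin n₂) (Fin n₂) ℝ)
    (F₁₃ : Matrix (Fin n₁) (Fin 1) ℝ) (F₃₁ : Matrix (Fin 1) (Fin n₁) ℝ)
    (F₃₂ : Matrix (Fin 1) (Fin n₂) ℝ) :
    Matrix ((Fin n₁ ⊕ (Fin n₂ ⊕ Fin 1)) ⊕ (Fin n₁ ⊕ (Fin n₂ ⊕ Fin 1)))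
      ((Fin n₁ ⊕ (Fin n₂ ⊕ Fin 1)) ⊕ (Fin n₁ ⊕ (Fin n₂ ⊕ Fin 1))) ℝ :=
  Matrix.fromBlocks
    (blockMatrix3 (1 : Matrix (Fin n₁) (Fin n₁) ℝ) 0 0 0 0 0 0 0 0) 0
    (blockMatrix3 J₁₁ J₁₂ F₁₃ J₂₁ J₂₂ 0 F₃₁ F₃₂ 0)
    (blockMatrix3 (1 : Matrix (Fin n₁) (Fin n₁) ℝ) 0 0 0 0 0 0 0 0)

/-- with `J₂₂` invertible, the kernel of `ℬ^{[1]}` is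
`{(0, 0, s₃, −F₁₃ s₃, u₂, u₃)}`; in particular there is a kernel vector whose
third block component equals `1`, so `ℬ^{[1]}` is not 1-full with respect to its
first `N` columns. -/
theorem calB1_kernel {n₁ n₂ : ℕ} (hn₁ : 1 ≤ n₁) (hn₂ : 1 ≤ n₂)
    (J₁₁ : Matrix (Fin n₁) (Fin n₁) ℝ) (J₁₂ : Matrix (Fin n₁) (Fin n₂) ℝ)
    (J₂₁ : Matrix (Fin n₂) (Fin n₁) ℝ) (J₂₂ : Matrix (Fin n₂) (Fin n₂) ℝ)
    (hJ₂₂ : IsUnit J₂₂)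
    (F₁₃ : Matrix (Fin n₁) (Fin 1) ℝ) (F₃₁ : Matrix (Fin 1) (Fin n₁) ℝ)
    (F₃₂ : Matrix (Fin 1) (Fin n₂) ℝ) :
    (∀ x : (Fin n₁ ⊕ (Fin n₂ ⊕ Fin 1)) ⊕ (Fin n₁ ⊕ (Fin n₂ ⊕ Fin 1)) → ℝ,
        (calB1 J₁₁ J₁₂ J₂₁ J₂₂ F₁₃ F₃₁ F₃₂).mulVec x = 0 ↔
          ((∀ i : Fin n₁, x (Sum.inl (Sum.inl i)) = 0) ∧
            (∀ i : Fin n₂, x (Sum.inl (Sum.inr (Sum.inl i))) = 0) ∧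
            (∀ i : Fin n₁, x (Sum.inr (Sum.inl i)) =
              -(F₁₃.mulVec (fun k => x (Sum.inl (Sum.inr (Sum.inr k)))) i)))) ∧
      (∃ x : (Fin n₁ ⊕ (Fin n₂ ⊕ Fin 1)) ⊕ (Fin n₁ ⊕ (Fin n₂ ⊕ Fin 1)) → ℝ,
        (calB1 J₁₁ J₁₂ J₂₁ J₂₂ F₁₃ F₃₁ F₃₂).mulVec x = 0 ∧
          x (Sum.inl (Sum.inr (Sum.inr 0))) = 1) ∧
      ¬ (∀ x : (Fin n₁ ⊕ (Fin n₂ ⊕ Fin 1)) ⊕ (Fin n₁ ⊕ (Fin n₂ ⊕ Fin 1)) → ℝ,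
          (calB1 J₁₁ J₁₂ J₂₁ J₂₂ F₁₃ F₃₁ F₃₂).mulVec x = 0 →
            ∀ i : Fin n₁ ⊕ (Fin n₂ ⊕ Fin 1), x (Sum.inl i) = 0) := by
  haveI := hJ₂₂.invertible
  have key : ∀ x : (Fin n₁ ⊕ (Fin n₂ ⊕ Fin 1)) ⊕ (Fin n₁ ⊕ (Fin n₂ ⊕ Fin 1)) → ℝ,
      (calB1 J₁₁ J₁₂ J₂₁ J₂₂ F₁₃ F₃₁ F₃₂).mulVec x = 0 ↔
        ((∀ i : Fin n₁, x (Sum.inl (Sum.inl i)) = 0) ∧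
          (∀ i : Fin n₂, x (Sum.inl (Sum.inr (Sum.inl i))) = 0) ∧
          (∀ i : Fin n₁, x (Sum.inr (Sum.inl i)) =
            -(F₁₃.mulVec (fun k => x (Sum.inl (Sum.inr (Sum.inr k)))) i))) := by
    intro x
    constructor
    · intro h
      have h1 : ∀ i : Fin n₁, x (Sum.inl (Sum.inl i)) = 0 := by
        intro i
        have := congrFun h (Sum.inl (Sum.inl i))
        simpa [calB1, blockMatrix3, mulVec, dotProduct, Fintype.sum_sum_type,
          Matrix.one_apply] using this
      have h2 : ∀ i : Fin n₂, x (Sum.inl (Sum.inr (Sum.inl i))) = 0 := by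
        have hker : J₂₂.mulVec (fun k => x (Sum.inl (Sum.inr (Sum.inl k)))) = 0 := by
          funext i
          have := congrFun h (Sum.inr (Sum.inr (Sum.inl i)))
          simp only [calB1, blockMatrix3, mulVec, dotProduct, Fintype.sum_sum_type,
            Pi.zero_apply] at this ⊢
          simpa [h1] using this
        have := Matrix.mulVec_injective_of_invertible J₂₂
          (by rw [hker, Matrix.mulVec_zero] :
            J₂₂.mulVec (fun k => x (Sum.inl (Sum.inr (Sum.inl k)))) = J₂₂.mulVec 0)
        intro i; exact congrFun this i
      refine ⟨h1, h2, fun i => ?_⟩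
      have := congrFun h (Sum.inr (Sum.inl i))
      simp only [calB1, blockMatrix3, mulVec, dotProduct, Fintype.sum_sum_type,
        Pi.zero_apply] at this
      simp [h1, h2, Matrix.one_apply] at this
      simp only [mulVec, dotProduct, Fin.sum_univ_one]
      linarith [this]
    · rintro ⟨h1, h2, h3⟩
      funext j
      rcases j with (i|i|i)|(i|i|i) <;>
        simp [calB1, blockMatrix3, mulVec, dotProduct, Fintype.sum_sum_type,
          Matrix.one_apply, h1, h2, h3]
  refine ⟨key, ?_, ?_⟩
  · refine ⟨Sum.elim (Sum.elim (fun _ => 0) (Sum.elim (fun _ => 0) (fun _ => 1)))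
      (Sum.elim (fun i => -(F₁₃.mulVec 1 i)) (fun _ => 0)), ?_, rfl⟩
    rw [key]
    refine ⟨fun i => rfl, fun i => rfl, fun i => ?_⟩
    simp [mulVec, dotProduct]
  · intro hfull
    obtain ⟨x, hx, hx1⟩ : (∃ x : (Fin n₁ ⊕ (Fin n₂ ⊕ Fin 1)) ⊕ (Fin n₁ ⊕ (Fin n₂ ⊕ Fin 1)) → ℝ,
        (calB1 J₁₁ J₁₂ J₂₁ J₂₂ F₁₃ F₃₁ F₃₂).mulVec x = 0 ∧
          x (Sum.inl (Sum.inr (Sum.inr 0))) = 1) := by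
      refine ⟨Sum.elim (Sum.elim (fun _ => 0) (Sum.elim (fun _ => 0) (fun _ => 1)))
        (Sum.elim (fun i => -(F₁₃.mulVec 1 i)) (fun _ => 0)), ?_, rfl⟩
      rw [key]
      refine ⟨fun i => rfl, fun i => rfl, fun i => ?_⟩
      simp [mulVec, dotProduct]
    have := hfull x hx (Sum.inr (Sum.inr 0))
    rw [hx1] at this
    exact one_ne_zero this
end

section
/- Let x̂ : ℝ × ℝ → ℝⁿ be continuously differentiable, ν : ℝ → ℝ continuous, q : ℝⁿ → ℝⁿ continuously differentiable, b : ℝ → ℝ^{n_in} and f : ℝ^{n_in} × ℝⁿ → ℝⁿ given. Assume the multirate partial differential algebraic equation ∂/∂t₁ q(x̂(t₁,t₂)) + ν(t₁) ∂/∂t₂ q(x̂(t₁,t₂)) = f(b(t₁), x̂(t₁,t₂)) holds for all (t₁,t₂). Define Ψ(t) := ∫₀ᵗ ν(τ) dτ and x(t) := x̂(t, Ψ(t)). Then for every t, the function t ↦ q(x(t)) is differentiable with d/dt q(x(t)) = f(b(t), x(t)), i.e., x solves the original differential algebraic equation; moreover x(0) = x̂(0,0). -/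
open Filter intervalIntegral

/-- if `x̂` solves the MPDAE
`∂/∂t₁ q(x̂(t₁,t₂)) + ν(t₁) ∂/∂t₂ q(x̂(t₁,t₂)) = f(b(t₁), x̂(t₁,t₂))`,
then the reconstruction `x(t) = x̂(t, Ψ(t))` with `Ψ(t) = ∫₀ᵗ ν` solves the
original DAE `d/dt q(x(t)) = f(b(t), x(t))`, and `x(0) = x̂(0,0)`. -/
theorem mpdae_reconstruction_solves_dae {n n_in : ℕ}
    (xh : ℝ × ℝ → Fin n → ℝ) (hxh : ContDiff ℝ 1 xh)
    (ν : ℝ → ℝ) (hν : Continuous ν)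
    (q : (Fin n → ℝ) → Fin n → ℝ) (hq : ContDiff ℝ 1 q)
    (b : ℝ → Fin n_in → ℝ) (f : (Fin n_in → ℝ) → (Fin n → ℝ) → Fin n → ℝ)
    (hmpdae : ∀ t₁ t₂ : ℝ,
      deriv (fun s => q (xh (s, t₂))) t₁ + ν t₁ • deriv (fun s => q (xh (t₁, s))) t₂ =
        f (b t₁) (xh (t₁, t₂))) :
    (∀ t : ℝ,
        HasDerivAt (fun s => q (xh (s, ∫ τ in (0 : ℝ)..s, ν τ)))
          (f (b t) (xh (t, ∫ τ in (0 : ℝ)..t, ν τ))) t) ∧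
      xh (0, ∫ τ in (0 : ℝ)..(0 : ℝ), ν τ) = xh (0, 0) := by
  have hQ : ContDiff ℝ 1 (fun p : ℝ × ℝ => q (xh p)) := hq.comp hxh
  have hQd : Differentiable ℝ (fun p : ℝ × ℝ => q (xh p)) := hQ.differentiable one_ne_zero
  refine ⟨fun t => ?_, by simp⟩
  set Ψ : ℝ → ℝ := fun s => ∫ τ in (0 : ℝ)..s, ν τ with hΨdef
  have hΨ : HasDerivAt Ψ (ν t) t :=
    intervalIntegral.integral_hasDerivAt_right (hν.intervalIntegrable 0 t)
      (hν.stronglyMeasurableAtFilter _ _) hν.continuousAt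
  have hcurve : HasDerivAt (fun s => ((s, Ψ s) : ℝ × ℝ)) (1, ν t) t :=
    HasDerivAt.prodMk (hasDerivAt_id t) hΨ
  have hF := (hQd (t, Ψ t)).hasFDerivAt
  have hmain : HasDerivAt (fun s => q (xh (s, Ψ s)))
      (fderiv ℝ (fun p : ℝ × ℝ => q (xh p)) (t, Ψ t) (1, ν t)) t :=
    hF.comp_hasDerivAt (f := fun s => ((s, Ψ s) : ℝ × ℝ)) t hcurve
  have h1 : HasDerivAt (fun s => q (xh (s, Ψ t)))
      (fderiv ℝ (fun p : ℝ × ℝ => q (xh p)) (t, Ψ t) (1, 0)) t :=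
    hF.comp_hasDerivAt (f := fun s => ((s, Ψ t) : ℝ × ℝ)) t (HasDerivAt.prodMk (hasDerivAt_id t) (hasDerivAt_const _ _))
  have h2 : HasDerivAt (fun s => q (xh (t, s)))
      (fderiv ℝ (fun p : ℝ × ℝ => q (xh p)) (t, Ψ t) (0, 1)) (Ψ t) :=
    hF.comp_hasDerivAt (f := fun s => ((t, s) : ℝ × ℝ)) (Ψ t) (HasDerivAt.prodMk (hasDerivAt_const _ _) (hasDerivAt_id (Ψ t)))
  have hsplit : fderiv ℝ (fun p : ℝ × ℝ => q (xh p)) (t, Ψ t) (1, ν t) =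
      fderiv ℝ (fun p : ℝ × ℝ => q (xh p)) (t, Ψ t) (1, 0) +
        ν t • fderiv ℝ (fun p : ℝ × ℝ => q (xh p)) (t, Ψ t) (0, 1) := by
    have h : ((1, ν t) : ℝ × ℝ) = (1, 0) + ν t • (0, 1) := by
      simp [Prod.ext_iff]
    rw [h, map_add, map_smul]
  have key := hmpdae t (Ψ t)
  rw [h1.deriv, h2.deriv, ← hsplit] at key
  rw [key] at hmain
  exact hmain
end
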